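/- Let ε ∈ (0, e^{−1}), a ∈ [0,1], b ∈ [0,1], j ≥ 0 an integer, K a positive integer with K > 1000·ν⁶ where ν := (j+1)·log(K/ε), and s an integer with 0 ≤ s ≤ j. Assume ⌈a⌉ < ⌊a + 2bK⌋ and additionally 2bK ≤ 4·ν³. Then ∑_{m=s}^{j} |w_{s,m,a,b,K}| ≤ (2b)^{−1/2} · (j+1) · 4^{j+2}. -/

import Mathlib

open scoped BigOperators
open Real

open scoped BigOperators
open Real

lemma fact_add_le (l k : ℕ) : (l + k).factorial ≤ l.factorial * (l + k) ^ k := by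
  induction k with
  | zero => simp
  | succ k ih =>
    have h1 : (l + (k+1)).factorial = (l + k + 1) * (l + k).factorial := by
      rw [show l + (k+1) = (l+k) + 1 by omega, Nat.factorial_succ]
    rw [h1]
    calc (l + k + 1) * (l + k).factorial ≤ (l + k + 1) * (l.factorial * (l + k) ^ k) :=
          Nat.mul_le_mul_left _ ih
      _ ≤ l.factorial * (l + (k+1)) ^ (k+1) := by
          rw [pow_succ]
          have h2 : (l + k) ^ k ≤ (l + (k+1)) ^ k := Nat.pow_le_pow_left (by omega) k
          calc (l + k + 1) * (l.factorial * (l + k) ^ k)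
              = l.factorial * ((l + k) ^ k * (l + k + 1)) := by ring
            _ ≤ l.factorial * ((l + (k+1)) ^ k * (l + (k+1))) := by
                exact Nat.mul_le_mul_left _ (Nat.mul_le_mul h2 (by omega))

lemma choose_le_two_pow' (m s : ℕ) (h : s ≤ m) : m.choose s ≤ 2 ^ m := by
  calc m.choose s ≤ ∑ i ∈ Finset.range (m+1), m.choose i :=
        Finset.single_le_sum (fun i _ => Nat.zero_le _) (Finset.mem_range.mpr (by omega))
    _ = 2 ^ m := Nat.sum_range_choose m

lemma geom_aux (u : ℕ) : ∑ l ∈ Finset.range (u+1), ((1:ℝ)/2)^((u-l)/2) ≤ 8 := by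
  have hrefl := Finset.sum_range_reflect (fun k => ((1:ℝ)/2)^(k/2)) (u+1)
  have heq : ∑ l ∈ Finset.range (u+1), ((1:ℝ)/2)^((u-l)/2)
      = ∑ k ∈ Finset.range (u+1), ((1:ℝ)/2)^(k/2) := by
    rw [← hrefl]
    simp
  rw [heq]
  set r : ℝ := (Real.sqrt 2)⁻¹ with hrdef
  have hs2 : Real.sqrt 2 ^ 2 = 2 := Real.sq_sqrt (by norm_num)
  have hs2pos : 0 < Real.sqrt 2 := Real.sqrt_pos.mpr (by norm_num)
  have hs2ge : (4:ℝ)/3 ≤ Real.sqrt 2 := by nlinarith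
  have hr0 : 0 < r := by positivity
  have hr1 : r ≤ 3/4 := by
    rw [hrdef, inv_le_iff_one_le_mul₀ hs2pos]
    nlinarith
  have hr2 : r^2 = 1/2 := by
    rw [hrdef, inv_pow, hs2]; norm_num
  have hterm : ∀ k : ℕ, ((1:ℝ)/2)^(k/2) ≤ 2 * r^k := by
    intro k
    have h1 : ((1:ℝ)/2)^(k/2) = r^(2*(k/2)) := by rw [pow_mul, hr2]
    rw [h1]
    have h2 : r^(2*(k/2)) ≤ r^(k-1) :=
      pow_le_pow_of_le_one hr0.le (by linarith) (by omega)
    refine h2.trans ?_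
    match k with
    | 0 => norm_num
    | (k+1) =>
      have h0 : (k+1) - 1 = k := rfl
      rw [h0, pow_succ]
      have h3 : (1:ℝ) ≤ 2 * r := by
        rw [hrdef]
        rw [show (2:ℝ) * (Real.sqrt 2)⁻¹ = 2 / Real.sqrt 2 by ring, le_div_iff₀ hs2pos]
        nlinarith
      nlinarith [pow_nonneg hr0.le k, pow_nonneg hr0.le (k+1)]
  calc ∑ k ∈ Finset.range (u+1), ((1:ℝ)/2)^(k/2)
      ≤ ∑ k ∈ Finset.range (u+1), 2 * r^k := Finset.sum_le_sum (fun k _ => hterm k)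
    _ = 2 * ∑ k ∈ Finset.range (u+1), r^k := by rw [Finset.mul_sum]
    _ ≤ 2 * 4 := by
        have hgeom : ∑ k ∈ Finset.range (u+1), r^k = (1 - r^(u+1))/(1 - r) := by
          rw [geom_sum_eq (by nlinarith : r ≠ 1)]
          rw [div_eq_div_iff (by nlinarith) (by nlinarith)]
          ring
        rw [hgeom]
        have h4 : (0:ℝ) ≤ r^(u+1) := by positivity
        have h6 : (0:ℝ) < 1 - r := by linarith
        have h7 : (1 - r^(u+1))/(1 - r) ≤ 4 := by
          rw [div_le_iff₀ h6]; nlinarith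
        linarith
    _ ≤ 8 := by norm_num

lemma core_ineq (s l t K : ℕ) (hK : 1 ≤ (K:ℝ)) (a b q : ℝ) (ha0 : 0 ≤ a) (ha1 : a ≤ 1)
    (hb : 0 < b) (hD : 1 ≤ 2*b*K) (hq0 : 0 ≤ q) (hq2 : q ≤ 2*(2*b*K))
    (hu : ((l:ℝ) + 2*t)^2 ≤ 2*Real.pi*(K:ℝ)) :
    q^s * (((s+l+2*t).factorial : ℝ) * Real.sqrt (2*Real.pi)) /
      (Real.sqrt 2 ^ (s+l+2*t) * (Nat.factorial s : ℝ) *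
        (2*Real.sqrt (Real.pi*b))^((s+l+2*t)+1) * (K:ℝ)^(s+l+2*t))
      * Real.sqrt (2*Real.pi/b) ^ s * (a * Real.sqrt (2*Real.pi/b))^l /
      ((Nat.factorial l : ℝ) * (Nat.factorial t : ℝ))
    ≤ (Real.sqrt 2 * Real.sqrt b)⁻¹ * (2^s * 2^(s+l+2*t)) * (1/2)^t := by
  have hpi := Real.pi_pos
  set r2 := Real.sqrt 2 with hr2def
  set rp := Real.sqrt Real.pi with hrpdef
  set β := Real.sqrt b with hβdef
  have hr2 : 0 < r2 := Real.sqrt_pos.mpr (by norm_num)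
  have hrp : 0 < rp := Real.sqrt_pos.mpr hpi
  have hβ : 0 < β := Real.sqrt_pos.mpr hb
  have h2 : r2^2 = 2 := Real.sq_sqrt (by norm_num)
  have hp2 : rp^2 = Real.pi := Real.sq_sqrt hpi.le
  have hb2 : β^2 = b := Real.sq_sqrt hb.le
  have hsqrt2pi : Real.sqrt (2*Real.pi) = r2 * rp := Real.sqrt_mul (by norm_num) _
  have hsqrtpib : Real.sqrt (Real.pi*b) = rp * β := Real.sqrt_mul hpi.le _
  have hsqrtdiv : Real.sqrt (2*Real.pi/b) = r2 * rp / β := by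
    rw [Real.sqrt_div (by positivity : (0:ℝ) ≤ 2*Real.pi), hsqrt2pi]
  rw [hsqrt2pi, hsqrtpib, hsqrtdiv]
  set D := 2*b*(K:ℝ) with hDdef
  have hD0 : 0 < D := lt_of_lt_of_le one_pos hD
  have hKpos : (0:ℝ) < K := lt_of_lt_of_le one_pos hK
  have hid : q^s * (((s+l+2*t).factorial : ℝ) * (r2*rp)) /
      (r2 ^ (s+l+2*t) * (Nat.factorial s : ℝ) *
        (2*(rp*β))^((s+l+2*t)+1) * (K:ℝ)^(s+l+2*t))
      * (r2*rp/β) ^ s * (a * (r2*rp/β))^l /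
      ((Nat.factorial l : ℝ) * (Nat.factorial t : ℝ))
    = (r2 * β)⁻¹ * ((q/D)^s * a^l * (D⁻¹)^l) *
      ((((s+l+2*t).factorial : ℝ) / ((Nat.factorial s : ℝ) * (Nat.factorial l : ℝ) * (Nat.factorial t : ℝ)))
        * (b/(2*Real.pi*D^2))^t) := by
    have hS : (0:ℝ) < (Nat.factorial s : ℝ) := by positivity
    have hL : (0:ℝ) < (Nat.factorial l : ℝ) := by positivity
    have hT : (0:ℝ) < (Nat.factorial t : ℝ) := by positivity
    rw [hDdef]
    rw [← h2, ← hp2, ← hb2]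
    have := hr2.ne'; have := hrp.ne'; have := hβ.ne'; have := hKpos.ne'
    field_simp
    simp only [div_pow, mul_pow, one_div, inv_pow]
    field_simp
    ring
  rw [hid]
  have hA1 : (q/D)^s * a^l * (D⁻¹)^l ≤ 2^s := by
    have h1 : q/D ≤ 2 := by
      rw [div_le_iff₀ hD0]; linarith
    have h2' : D⁻¹ ≤ 1 := by
      exact inv_le_one_of_one_le₀ hD
    calc (q/D)^s * a^l * (D⁻¹)^l ≤ 2^s * 1^l * 1^l := by
          gcongr <;> positivity
      _ = 2^s := by simp
  have hMnat : (s+l+2*t).factorial ≤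
      2^(s+l+2*t) * (l+2*t)^(2*t) * (Nat.factorial s * Nat.factorial l * Nat.factorial t) := by
    have h1 : (s+l+2*t).factorial = (s+l+2*t).choose s * Nat.factorial s * Nat.factorial (l+2*t) := by
      have := Nat.choose_mul_factorial_mul_factorial (show s ≤ s+l+2*t by omega)
      rw [show s+l+2*t-s = l+2*t by omega] at this
      omega
    rw [h1]
    have h2' : (s+l+2*t).choose s ≤ 2^(s+l+2*t) := choose_le_two_pow' _ _ (by omega)
    have h3 : Nat.factorial (l+2*t) ≤ Nat.factorial l * (l+2*t)^(2*t) := fact_add_le l (2*t)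
    have h4 : 1 ≤ Nat.factorial t := Nat.one_le_iff_ne_zero.mpr (Nat.factorial_ne_zero t)
    calc (s+l+2*t).choose s * Nat.factorial s * Nat.factorial (l+2*t)
        ≤ 2^(s+l+2*t) * Nat.factorial s * (Nat.factorial l * (l+2*t)^(2*t)) :=
          Nat.mul_le_mul (Nat.mul_le_mul h2' le_rfl) h3
      _ = 2^(s+l+2*t) * (l+2*t)^(2*t) * (Nat.factorial s * Nat.factorial l * 1) := by ring
      _ ≤ 2^(s+l+2*t) * (l+2*t)^(2*t) * (Nat.factorial s * Nat.factorial l * Nat.factorial t) := by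
          exact Nat.mul_le_mul le_rfl (Nat.mul_le_mul le_rfl h4)
  have hM : (((s+l+2*t).factorial : ℝ) / ((Nat.factorial s : ℝ) * (Nat.factorial l : ℝ) * (Nat.factorial t : ℝ)))
      ≤ 2^(s+l+2*t) * ((l:ℝ)+2*t)^(2*t) := by
    rw [div_le_iff₀ (by positivity)]
    calc (((s+l+2*t).factorial : ℝ)) ≤ ((2^(s+l+2*t) * (l+2*t)^(2*t) * (Nat.factorial s * Nat.factorial l * Nat.factorial t) : ℕ) : ℝ) := by
          exact_mod_cast hMnat
      _ = 2^(s+l+2*t) * ((l:ℝ)+2*t)^(2*t) * ((Nat.factorial s : ℝ) * (Nat.factorial l : ℝ) * (Nat.factorial t : ℝ)) := by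
          push_cast; ring
  have hbase : ((l:ℝ)+2*t)^2 * (b/(2*Real.pi*D^2)) ≤ 1/2 := by
    have h1 : b/(2*Real.pi*D^2) ≤ 1/(4*Real.pi*(K:ℝ)) := by
      rw [div_le_div_iff₀ (by positivity) (by positivity), hDdef]
      nlinarith [mul_pos hb hKpos, mul_pos (mul_pos hb hKpos) hpi]
    calc ((l:ℝ)+2*t)^2 * (b/(2*Real.pi*D^2)) ≤ (2*Real.pi*(K:ℝ)) * (1/(4*Real.pi*(K:ℝ))) := by
          apply mul_le_mul hu h1 (by positivity) (by positivity)
      _ = 1/2 := by field_simp; ring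
  have hA2 : (((s+l+2*t).factorial : ℝ) / ((Nat.factorial s : ℝ) * (Nat.factorial l : ℝ) * (Nat.factorial t : ℝ)))
      * (b/(2*Real.pi*D^2))^t ≤ 2^(s+l+2*t) * (1/2)^t := by
    calc (((s+l+2*t).factorial : ℝ) / ((Nat.factorial s : ℝ) * (Nat.factorial l : ℝ) * (Nat.factorial t : ℝ)))
        * (b/(2*Real.pi*D^2))^t
        ≤ (2^(s+l+2*t) * ((l:ℝ)+2*t)^(2*t)) * (b/(2*Real.pi*D^2))^t := by
          apply mul_le_mul_of_nonneg_right hM (by positivity)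
      _ = 2^(s+l+2*t) * ((((l:ℝ)+2*t)^2 * (b/(2*Real.pi*D^2)))^t) := by
          have pow_aux : ∀ (u Y : ℝ), u^(2*t) * Y^t = (u^2*Y)^t := by
            intro u Y; rw [mul_pow, ← pow_mul]
          rw [mul_assoc, pow_aux]
      _ ≤ 2^(s+l+2*t) * (1/2)^t := by
          apply mul_le_mul_of_nonneg_left _ (by positivity)
          exact pow_le_pow_left₀ (by positivity) hbase t
  have hc : (0:ℝ) ≤ (r2*β)⁻¹ := by positivity
  calc (r2 * β)⁻¹ * ((q/D)^s * a^l * (D⁻¹)^l) *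
      ((((s+l+2*t).factorial : ℝ) / ((Nat.factorial s : ℝ) * (Nat.factorial l : ℝ) * (Nat.factorial t : ℝ)))
        * (b/(2*Real.pi*D^2))^t)
      = (r2*β)⁻¹ * (((q/D)^s * a^l * (D⁻¹)^l) *
        ((((s+l+2*t).factorial : ℝ) / ((Nat.factorial s : ℝ) * (Nat.factorial l : ℝ) * (Nat.factorial t : ℝ)))
        * (b/(2*Real.pi*D^2))^t)) := by ring
    _ ≤ (r2*β)⁻¹ * (2^s * (2^(s+l+2*t) * (1/2)^t)) := by
        apply mul_le_mul_of_nonneg_left _ hc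
        apply mul_le_mul hA1 hA2 (by positivity) (by positivity)
    _ = (r2 * β)⁻¹ * (2^s * 2^(s+l+2*t)) * (1/2)^t := by ring

lemma core_ineq' (s l m K : ℕ) (hsm : s ≤ m) (hl : l ≤ m - s) (heven : (m - s - l) % 2 = 0)
    (hK : 1 ≤ (K:ℝ)) (a b q : ℝ) (ha0 : 0 ≤ a) (ha1 : a ≤ 1)
    (hb : 0 < b) (hD : 1 ≤ 2*b*K) (hq0 : 0 ≤ q) (hq2 : q ≤ 2*(2*b*K))
    (hu : ((m:ℝ) - (s:ℝ))^2 ≤ 2*Real.pi*(K:ℝ)) :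
    q^s * ((m.factorial : ℝ) * Real.sqrt (2*Real.pi)) /
      (Real.sqrt 2 ^ m * (Nat.factorial s : ℝ) *
        (2*Real.sqrt (Real.pi*b))^(m+1) * (K:ℝ)^m)
      * Real.sqrt (2*Real.pi/b) ^ s * (a * Real.sqrt (2*Real.pi/b))^l /
      ((Nat.factorial l : ℝ) * ((((m-s-l)/2).factorial : ℝ)))
    ≤ (Real.sqrt 2 * Real.sqrt b)⁻¹ * (2^s * 2^m) * ((1:ℝ)/2)^((m-s-l)/2) := by
  obtain ⟨t, ht⟩ : ∃ t, m - s - l = 2*t := ⟨(m-s-l)/2, by omega⟩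
  have hm : m = s + l + 2*t := by omega
  subst hm
  have h1 : s + l + 2*t - s - l = 2*t := by omega
  rw [h1, Nat.mul_div_cancel_left t (by norm_num : 0 < 2)]
  have hu' : ((l:ℝ) + 2*t)^2 ≤ 2*Real.pi*(K:ℝ) := by
    have : ((l:ℝ) + 2*t) = ((s + l + 2*t : ℕ):ℝ) - (s:ℝ) := by push_cast; ring
    rw [this]; exact hu
  exact core_ineq s l t K hK a b q ha0 ha1 hb hD hq0 hq2 hu'

/-- The coefficients `w_{s,m,a,b,K}` of the theta algorithm. -/
noncomputable def wcoef (s m K : ℕ) (a b : ℝ) : ℂ :=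
  ((⌊a + 2 * b * K⌋ : ℤ) : ℂ) ^ s *
    ((m.factorial : ℂ) * ((Real.sqrt (2 * Real.pi) : ℝ) : ℂ) *
        Complex.exp (Complex.I * (Real.pi : ℂ) / 4) *
        Complex.exp (3 * (Real.pi : ℂ) * Complex.I * ((m - s : ℕ) : ℂ) / 4) *
        Complex.exp (-(Complex.I) * (Real.pi : ℂ) * (a : ℂ) ^ 2 / (2 * (b : ℂ)))) /
      (((Real.sqrt 2 : ℝ) : ℂ) ^ m * (s.factorial : ℂ) *
        (((2 * Real.sqrt (Real.pi * b)) : ℝ) : ℂ) ^ (m + 1) * (K : ℂ) ^ m) *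
    (((Real.sqrt (2 * Real.pi / b) : ℝ) : ℂ)) ^ s *
    ∑ l ∈ Finset.range (m - s + 1),
      (if (m - s - l) % 2 = 0 then (1 : ℂ) else 0) * (-1 : ℂ) ^ ((m + l - s) / 2) /
          ((l.factorial : ℂ) * (((m - s - l) / 2).factorial : ℂ)) *
        ((a : ℂ) * Complex.exp (-(3 * (Real.pi : ℂ) * Complex.I) / 4) *
          ((Real.sqrt (2 * Real.pi / b) : ℝ) : ℂ)) ^ l

set_option maxHeartbeats 2000000 in
/-- Bound on the coefficient sums `∑_{m=s}^{j} |w_{s,m,a,b,K}|`. -/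
theorem wcoef_sum_bound_small (ε : ℝ) (hε : ε ∈ Set.Ioo 0 (Real.exp (-1)))
    (a b : ℝ) (ha : a ∈ Set.Icc (0 : ℝ) 1) (hb : b ∈ Set.Icc (0 : ℝ) 1)
    (j K : ℕ) (hK : 0 < K)
    (hKbig : 1000 * (((j : ℝ) + 1) * Real.log ((K : ℝ) / ε)) ^ 6 < (K : ℝ))
    (s : ℕ) (hs : s ≤ j)
    (hpq : (⌈a⌉ : ℤ) < ⌊a + 2 * b * K⌋)
    (hsmall : 2 * b * K ≤ 4 * (((j : ℝ) + 1) * Real.log ((K : ℝ) / ε)) ^ 3) :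
    ∑ m ∈ Finset.Icc s j, ‖wcoef s m K a b‖ ≤
      (Real.sqrt (2 * b))⁻¹ * ((j : ℝ) + 1) * 4 ^ (j + 2) := by
  obtain ⟨hε0, hε1⟩ := hε
  obtain ⟨ha0, ha1⟩ := ha
  obtain ⟨hbl, hbu⟩ := hb
  have hKR : (1:ℝ) ≤ (K:ℝ) := by exact_mod_cast hK
  have hb0 : 0 < b := by
    rcases eq_or_lt_of_le hbl with h | h
    · exfalso
      rw [← h] at hpq
      norm_num at hpq
      exact absurd hpq (not_lt.mpr (Int.floor_le_ceil a))
    · exact h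
  have hfl : ((⌊a + 2*b*(K:ℝ)⌋:ℤ):ℝ) ≤ a + 2*b*(K:ℝ) := Int.floor_le _
  have hceil : a ≤ ((⌈a⌉:ℤ):ℝ) := Int.le_ceil a
  have hql : ((⌈a⌉:ℤ):ℝ) + 1 ≤ ((⌊a + 2*b*(K:ℝ)⌋:ℤ):ℝ) := by
    exact_mod_cast Int.add_one_le_iff.mpr hpq
  have hceil0 : (0:ℝ) ≤ ((⌈a⌉:ℤ):ℝ) := by exact_mod_cast Int.ceil_nonneg ha0
  have hD1 : 1 ≤ 2*b*(K:ℝ) := by linarith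
  have hq0 : (0:ℝ) ≤ ((⌊a + 2*b*(K:ℝ)⌋:ℤ):ℝ) := by linarith
  have hq2 : ((⌊a + 2*b*(K:ℝ)⌋:ℤ):ℝ) ≤ 2*(2*b*(K:ℝ)) := by linarith
  -- log bounds
  have hlog : 1 ≤ Real.log ((K:ℝ)/ε) := by
    rw [Real.le_log_iff_exp_le (by positivity)]
    have h1 : Real.exp 1 * ε ≤ 1 := by
      have h2 := mul_le_mul_of_nonneg_left hε1.le (Real.exp_pos 1).le
      rw [← Real.exp_add] at h2
      norm_num at h2
      exact h2
    rw [le_div_iff₀ hε0]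
    linarith
  have hν1 : 1 ≤ ((j:ℝ)+1) * Real.log ((K:ℝ)/ε) := by
    have h1 : (1:ℝ) ≤ (j:ℝ)+1 := by
      have := Nat.cast_nonneg (α := ℝ) j
      linarith
    nlinarith
  have hjK : ((j:ℝ))^2 < (K:ℝ) := by
    set ν := ((j:ℝ)+1) * Real.log ((K:ℝ)/ε) with hν
    have h2 : (j:ℝ) + 1 ≤ ν := by
      have h1 : (0:ℝ) ≤ (j:ℝ)+1 := by positivity
      nlinarith
    have h14 : (1:ℝ) ≤ ν^4 := by nlinarith [sq_nonneg ν, sq_nonneg (ν-1), sq_nonneg (ν^2-1)]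
    have h3 : ν^2 ≤ ν^6 := by
      calc ν^2 = ν^2 * 1 := (mul_one _).symm
        _ ≤ ν^2 * ν^4 := mul_le_mul_of_nonneg_left h14 (sq_nonneg ν)
        _ = ν^6 := by ring
    have h4 : ((j:ℝ)+1)^2 ≤ ν^2 := by nlinarith
    nlinarith [(Nat.cast_nonneg j : (0:ℝ) ≤ (j:ℝ))]
  -- the key per-m bound
  have key : ∀ m ∈ Finset.Icc s j, ‖wcoef s m K a b‖ ≤ (Real.sqrt (2*b))⁻¹ * 4^(j+2) := by
    intro m hm
    rw [Finset.mem_Icc] at hm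
    obtain ⟨hsm, hmj⟩ := hm
    have hnr : ∀ r : ℝ, ‖(r:ℂ)‖ = |r| := fun r => by rw [Complex.norm_real, Real.norm_eq_abs]
    have e1 : ‖(Complex.exp (Complex.I * (Real.pi:ℂ) / 4))‖ = 1 := by
      have h : Complex.I * (Real.pi:ℂ) / 4 = ((Real.pi/4 : ℝ):ℂ) * Complex.I := by
        push_cast; ring
      rw [h, Complex.norm_exp_ofReal_mul_I]
    have e2 : ‖(Complex.exp (3 * (Real.pi:ℂ) * Complex.I * ((m - s:ℕ):ℂ) / 4))‖ = 1 := by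
      have h : 3 * (Real.pi:ℂ) * Complex.I * ((m - s:ℕ):ℂ) / 4
          = ((3*Real.pi*((m-s:ℕ):ℝ)/4 : ℝ):ℂ) * Complex.I := by
        push_cast; ring
      rw [h, Complex.norm_exp_ofReal_mul_I]
    have e3 : ‖(Complex.exp (-(Complex.I) * (Real.pi:ℂ) * (a:ℂ)^2 / (2*(b:ℂ))))‖ = 1 := by
      have h : -(Complex.I) * (Real.pi:ℂ) * (a:ℂ)^2 / (2*(b:ℂ))
          = ((-(Real.pi*a^2/(2*b)) : ℝ):ℂ) * Complex.I := by
        push_cast; ring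
      rw [h, Complex.norm_exp_ofReal_mul_I]
    have ec : ‖(Complex.exp (-(3 * (Real.pi:ℂ) * Complex.I) / 4))‖ = 1 := by
      have h : -(3 * (Real.pi:ℂ) * Complex.I) / 4 = ((-(3*Real.pi/4) : ℝ):ℂ) * Complex.I := by
        push_cast; ring
      rw [h, Complex.norm_exp_ofReal_mul_I]
    have hcast : ((⌊a + 2 * b * (K:ℕ)⌋ : ℤ) : ℂ) = (((⌊a + 2*b*(K:ℝ)⌋:ℤ):ℝ) : ℂ) := by
      push_cast; ring
    have hP : ‖wcoef s m K a b‖ =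
        (((⌊a + 2*b*(K:ℝ)⌋:ℤ):ℝ))^s * ((m.factorial : ℝ) * Real.sqrt (2*Real.pi)) /
          (Real.sqrt 2 ^ m * (Nat.factorial s : ℝ) *
            (2*Real.sqrt (Real.pi*b))^(m+1) * (K:ℝ)^m)
          * Real.sqrt (2*Real.pi/b) ^ s *
        ‖∑ l ∈ Finset.range (m - s + 1),
          (if (m - s - l) % 2 = 0 then (1 : ℂ) else 0) * (-1 : ℂ) ^ ((m + l - s) / 2) /
              ((l.factorial : ℂ) * (((m - s - l) / 2).factorial : ℂ)) *
            ((a : ℂ) * Complex.exp (-(3 * (Real.pi : ℂ) * Complex.I) / 4) *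
              ((Real.sqrt (2 * Real.pi / b) : ℝ) : ℂ)) ^ l‖ := by
      rw [wcoef, hcast]
      simp only [norm_mul, norm_div, norm_pow, hnr, Complex.norm_natCast,
        e1, e2, e3, mul_one, one_mul]
      rw [abs_of_nonneg hq0, abs_of_nonneg (Real.sqrt_nonneg (2*Real.pi)), abs_of_nonneg (Real.sqrt_nonneg 2), abs_of_nonneg (Real.sqrt_nonneg (2*Real.pi/b)),
        abs_of_nonneg (by positivity : (0:ℝ) ≤ 2*Real.sqrt (Real.pi*b))]
    rw [hP]
    have hXnn : (0:ℝ) ≤ Real.sqrt (2*Real.pi/b) := Real.sqrt_nonneg _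
    have hPnn : (0:ℝ) ≤ (((⌊a + 2*b*(K:ℝ)⌋:ℤ):ℝ))^s * ((m.factorial : ℝ) * Real.sqrt (2*Real.pi)) /
          (Real.sqrt 2 ^ m * (Nat.factorial s : ℝ) *
            (2*Real.sqrt (Real.pi*b))^(m+1) * (K:ℝ)^m)
          * Real.sqrt (2*Real.pi/b) ^ s := by
      apply mul_nonneg
      · apply div_nonneg
        · exact mul_nonneg (pow_nonneg hq0 s) (by positivity)
        · positivity
      · positivity
    have hSum : ‖∑ l ∈ Finset.range (m - s + 1),
          (if (m - s - l) % 2 = 0 then (1 : ℂ) else 0) * (-1 : ℂ) ^ ((m + l - s) / 2) /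
              ((l.factorial : ℂ) * (((m - s - l) / 2).factorial : ℂ)) *
            ((a : ℂ) * Complex.exp (-(3 * (Real.pi : ℂ) * Complex.I) / 4) *
              ((Real.sqrt (2 * Real.pi / b) : ℝ) : ℂ)) ^ l‖
        ≤ ∑ l ∈ Finset.range (m - s + 1),
            (if (m - s - l) % 2 = 0 then (1:ℝ) else 0) * (a * Real.sqrt (2*Real.pi/b))^l /
              ((Nat.factorial l : ℝ) * ((((m-s-l)/2).factorial : ℝ))) := by
      refine (norm_sum_le _ _).trans ?_
      apply Finset.sum_le_sum
      intro l _
      have hneg : ‖((-1:ℂ) ^ ((m + l - s) / 2))‖ = 1 := by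
        rw [norm_pow]
        simp
      have hite : ‖(if (m - s - l) % 2 = 0 then (1:ℂ) else 0)‖
          = (if (m - s - l) % 2 = 0 then (1:ℝ) else 0) := by
        split_ifs <;> simp
      simp only [norm_mul, norm_div, norm_pow, hnr, Complex.norm_natCast,
        ec, mul_one, one_mul, hneg, hite]
      rw [abs_of_nonneg ha0, abs_of_nonneg (Real.sqrt_nonneg (2*Real.pi/b))]
      apply le_of_eq
      ring
    calc (((⌊a + 2*b*(K:ℝ)⌋:ℤ):ℝ))^s * ((m.factorial : ℝ) * Real.sqrt (2*Real.pi)) /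
          (Real.sqrt 2 ^ m * (Nat.factorial s : ℝ) *
            (2*Real.sqrt (Real.pi*b))^(m+1) * (K:ℝ)^m)
          * Real.sqrt (2*Real.pi/b) ^ s *
        ‖∑ l ∈ Finset.range (m - s + 1),
          (if (m - s - l) % 2 = 0 then (1 : ℂ) else 0) * (-1 : ℂ) ^ ((m + l - s) / 2) /
              ((l.factorial : ℂ) * (((m - s - l) / 2).factorial : ℂ)) *
            ((a : ℂ) * Complex.exp (-(3 * (Real.pi : ℂ) * Complex.I) / 4) *
              ((Real.sqrt (2 * Real.pi / b) : ℝ) : ℂ)) ^ l‖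
        ≤ (((⌊a + 2*b*(K:ℝ)⌋:ℤ):ℝ))^s * ((m.factorial : ℝ) * Real.sqrt (2*Real.pi)) /
          (Real.sqrt 2 ^ m * (Nat.factorial s : ℝ) *
            (2*Real.sqrt (Real.pi*b))^(m+1) * (K:ℝ)^m)
          * Real.sqrt (2*Real.pi/b) ^ s *
          (∑ l ∈ Finset.range (m - s + 1),
            (if (m - s - l) % 2 = 0 then (1:ℝ) else 0) * (a * Real.sqrt (2*Real.pi/b))^l /
              ((Nat.factorial l : ℝ) * ((((m-s-l)/2).factorial : ℝ)))) :=
          mul_le_mul_of_nonneg_left hSum hPnn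
      _ = ∑ l ∈ Finset.range (m - s + 1),
            (((⌊a + 2*b*(K:ℝ)⌋:ℤ):ℝ))^s * ((m.factorial : ℝ) * Real.sqrt (2*Real.pi)) /
          (Real.sqrt 2 ^ m * (Nat.factorial s : ℝ) *
            (2*Real.sqrt (Real.pi*b))^(m+1) * (K:ℝ)^m)
          * Real.sqrt (2*Real.pi/b) ^ s *
            ((if (m - s - l) % 2 = 0 then (1:ℝ) else 0) * (a * Real.sqrt (2*Real.pi/b))^l /
              ((Nat.factorial l : ℝ) * ((((m-s-l)/2).factorial : ℝ)))) := Finset.mul_sum _ _ _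
      _ ≤ ∑ l ∈ Finset.range (m - s + 1),
            (Real.sqrt 2 * Real.sqrt b)⁻¹ * (2^s * 2^m) * ((1:ℝ)/2)^((m-s-l)/2) := by
          apply Finset.sum_le_sum
          intro l hl
          have hl' : l ≤ m - s := by
            rw [Finset.mem_range] at hl; omega
          by_cases hpar : (m - s - l) % 2 = 0
          · rw [if_pos hpar]
            have hms : ((m:ℝ) - (s:ℝ))^2 ≤ 2*Real.pi*(K:ℝ) := by
              have h1 : ((m:ℝ)) ≤ (j:ℝ) := by exact_mod_cast hmj
              have h2 : ((s:ℝ)) ≤ (m:ℝ) := by exact_mod_cast hsm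
              have h3 : (0:ℝ) ≤ (s:ℝ) := Nat.cast_nonneg s
              nlinarith [Real.pi_gt_three]
            have hcore := core_ineq' s l m K hsm hl' hpar hKR a b
              (((⌊a + 2*b*(K:ℝ)⌋:ℤ):ℝ)) ha0 ha1 hb0 hD1 hq0 hq2 hms
            calc (((⌊a + 2*b*(K:ℝ)⌋:ℤ):ℝ))^s * ((m.factorial : ℝ) * Real.sqrt (2*Real.pi)) /
                (Real.sqrt 2 ^ m * (Nat.factorial s : ℝ) *
                  (2*Real.sqrt (Real.pi*b))^(m+1) * (K:ℝ)^m)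
                * Real.sqrt (2*Real.pi/b) ^ s *
                ((1:ℝ) * (a * Real.sqrt (2*Real.pi/b))^l /
                  ((Nat.factorial l : ℝ) * ((((m-s-l)/2).factorial : ℝ))))
                = (((⌊a + 2*b*(K:ℝ)⌋:ℤ):ℝ))^s * ((m.factorial : ℝ) * Real.sqrt (2*Real.pi)) /
                (Real.sqrt 2 ^ m * (Nat.factorial s : ℝ) *
                  (2*Real.sqrt (Real.pi*b))^(m+1) * (K:ℝ)^m)
                * Real.sqrt (2*Real.pi/b) ^ s * (a * Real.sqrt (2*Real.pi/b))^l /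
                ((Nat.factorial l : ℝ) * ((((m-s-l)/2).factorial : ℝ))) := by ring
              _ ≤ (Real.sqrt 2 * Real.sqrt b)⁻¹ * (2^s * 2^m) * ((1:ℝ)/2)^((m-s-l)/2) := hcore
          · rw [if_neg hpar]
            have : (0:ℝ) * (a * Real.sqrt (2*Real.pi/b))^l /
              ((Nat.factorial l : ℝ) * ((((m-s-l)/2).factorial : ℝ))) = 0 := by ring
            rw [this, mul_zero]
            positivity
      _ = (Real.sqrt 2 * Real.sqrt b)⁻¹ * (2^s * 2^m) *
            ∑ l ∈ Finset.range (m - s + 1), ((1:ℝ)/2)^((m-s-l)/2) := by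
          rw [← Finset.mul_sum]
      _ ≤ (Real.sqrt 2 * Real.sqrt b)⁻¹ * (2^s * 2^m) * 8 := by
          apply mul_le_mul_of_nonneg_left (geom_aux (m-s)) (by positivity)
      _ ≤ (Real.sqrt (2*b))⁻¹ * 4^(j+2) := by
          rw [Real.sqrt_mul (by norm_num : (0:ℝ) ≤ 2)]
          have h2s : (2:ℝ)^s ≤ 2^j := pow_le_pow_right₀ one_le_two (le_trans hsm hmj)
          have h2m : (2:ℝ)^m ≤ 2^j := pow_le_pow_right₀ one_le_two hmj
          have h4 : (4:ℝ)^(j+2) = 2^j * 2^j * 16 := by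
            rw [show (4:ℝ) = 2*2 by norm_num, mul_pow, pow_add]
            ring
          rw [h4]
          have h5 : (2:ℝ)^s * 2^m * 8 ≤ 2^j * 2^j * 16 := by
            have h6 : (2:ℝ)^s * 2^m ≤ 2^j * 2^j :=
              mul_le_mul h2s h2m (by positivity) (by positivity)
            nlinarith [pow_pos (show (0:ℝ) < 2 by norm_num) j]
          calc (Real.sqrt 2 * Real.sqrt b)⁻¹ * (2^s * 2^m) * 8
              = (Real.sqrt 2 * Real.sqrt b)⁻¹ * (2^s * 2^m * 8) := by ring
            _ ≤ (Real.sqrt 2 * Real.sqrt b)⁻¹ * (2^j * 2^j * 16) :=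
                mul_le_mul_of_nonneg_left h5 (by positivity)
  -- conclude
  calc ∑ m ∈ Finset.Icc s j, ‖wcoef s m K a b‖
      ≤ ∑ _m ∈ Finset.Icc s j, (Real.sqrt (2*b))⁻¹ * 4^(j+2) := Finset.sum_le_sum key
    _ = ((Finset.Icc s j).card : ℝ) * ((Real.sqrt (2*b))⁻¹ * 4^(j+2)) := by
        rw [Finset.sum_const, nsmul_eq_mul]
    _ ≤ ((j:ℝ)+1) * ((Real.sqrt (2*b))⁻¹ * 4^(j+2)) := by
        apply mul_le_mul_of_nonneg_right _ (by positivity)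
        rw [Nat.card_Icc]
        calc ((j + 1 - s : ℕ) : ℝ) ≤ ((j + 1 : ℕ) : ℝ) := by
              exact_mod_cast Nat.sub_le _ _
          _ = (j:ℝ) + 1 := by push_cast; ring
    _ = (Real.sqrt (2*b))⁻¹ * ((j:ℝ)+1) * 4^(j+2) := by ring
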